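/- Both z_min and z_max are strictly decreasing functions of T on (0,∞): their derivatives dz_min/dT = CAe^{A(T+τ₁)}(I-e^{AT})^{-2}B and dz_max/dT = CAe^{A(T+τ₂)}(I-e^{AT})^{-2}B are negative for all T > 0. -/

import Mathlib

open Matrix Set Filter

noncomputable def Acas (a₁ a₂ a₃ g₁ g₂ : ℝ) : Matrix (Fin 3) (Fin 3) ℝ :=
  !![-a₁, 0, 0; g₁, -a₂, 0; 0, g₂, -a₃]

def Bcas : Fin 3 → ℝ := ![1, 0, 0]

/-- impulse response g(t) = C e^{tA} B with C = (0,0,1) -/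
noncomputable def impResp (a₁ a₂ a₃ g₁ g₂ : ℝ) (t : ℝ) : ℝ :=
  ((NormedSpace.exp (t • Acas a₁ a₂ a₃ g₁ g₂)) *ᵥ Bcas) 2

/-- z(τ,T) = C e^{Aτ} (I - e^{AT})⁻¹ B -/
noncomputable def zfun (a₁ a₂ a₃ g₁ g₂ : ℝ) (τ T : ℝ) : ℝ :=
  ((NormedSpace.exp (τ • Acas a₁ a₂ a₃ g₁ g₂) *
    (1 - NormedSpace.exp (T • Acas a₁ a₂ a₃ g₁ g₂))⁻¹) *ᵥ Bcas) 2

noncomputable def zmaxF (a₁ a₂ a₃ g₁ g₂ T : ℝ) : ℝ :=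
  sSup ((fun τ => zfun a₁ a₂ a₃ g₁ g₂ τ T) '' Set.Icc 0 T)

noncomputable def zminF (a₁ a₂ a₃ g₁ g₂ T : ℝ) : ℝ :=
  sInf ((fun τ => zfun a₁ a₂ a₃ g₁ g₂ τ T) '' Set.Icc 0 T)

/-! ### Scalar toolkit -/

set_option maxHeartbeats 1000000

lemma Zc.pos_of_deriv_pos {F F' : ℝ → ℝ} (hF : ∀ x, HasDerivAt F (F' x) x) (h0 : F 0 = 0)
    (hpos : ∀ x > 0, 0 < F' x) : ∀ x > 0, 0 < F x := by
  intro x hx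
  have hm : StrictMonoOn F (Ici 0) := by
    refine strictMonoOn_of_deriv_pos (convex_Ici 0)
      (fun y _ => (hF y).continuousAt.continuousWithinAt) (fun y hy => ?_)
    rw [(hF y).deriv]
    exact hpos y (by simpa [interior_Ici] using hy)
  have := hm self_mem_Ici (le_of_lt hx) hx
  simpa [h0] using this

lemma Zc.one_sub_exp_lt {s : ℝ} (hs : 0 < s) : 1 - Real.exp (-s) < s := by
  have := Real.add_one_lt_exp (x := -s) (by linarith)
  linarith

lemma Zc.pade_aux {s : ℝ} (hs : 0 < s) : 0 < 1 - Real.exp (-s) - s * Real.exp (-s) := by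
  have hF : ∀ x : ℝ, HasDerivAt (fun y => 1 - Real.exp (-y) - y * Real.exp (-y))
      (x * Real.exp (-x)) x := by
    intro x
    have he : HasDerivAt (fun y : ℝ => Real.exp (-y)) (-Real.exp (-x)) x := by
      exact ((Real.hasDerivAt_exp (-x)).comp x (hasDerivAt_neg x)).congr_deriv (by ring)
    have h2 : HasDerivAt (fun y : ℝ => y * Real.exp (-y))
        (1 * Real.exp (-x) + x * -Real.exp (-x)) x := (hasDerivAt_id x).mul he
    have := ((hasDerivAt_const x (1:ℝ)).sub he).sub h2
    refine this.congr_deriv ?_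
    ring
  exact Zc.pos_of_deriv_pos hF (by simp) (fun x hx => by positivity) s hs

lemma Zc.pade {s : ℝ} (hs : 0 < s) : 0 < s + s * Real.exp (-s) + 2 * Real.exp (-s) - 2 := by
  have hF : ∀ x : ℝ, HasDerivAt (fun y => y + y * Real.exp (-y) + 2 * Real.exp (-y) - 2)
      (1 - Real.exp (-x) - x * Real.exp (-x)) x := by
    intro x
    have he : HasDerivAt (fun y : ℝ => Real.exp (-y)) (-Real.exp (-x)) x := by
      exact ((Real.hasDerivAt_exp (-x)).comp x (hasDerivAt_neg x)).congr_deriv (by ring)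
    have h2 : HasDerivAt (fun y : ℝ => y * Real.exp (-y))
        (1 * Real.exp (-x) + x * -Real.exp (-x)) x := (hasDerivAt_id x).mul he
    have := (((hasDerivAt_id x).add h2).add (he.const_mul 2)).sub_const 2
    refine this.congr_deriv ?_
    ring
  exact Zc.pos_of_deriv_pos hF (by simp) (fun x hx => Zc.pade_aux hx) s hs

lemma Zc.one_sub_exp_pos {s : ℝ} (hs : 0 < s) : 0 < 1 - Real.exp (-s) := by
  have : Real.exp (-s) < 1 := Real.exp_lt_one_iff.mpr (by linarith)
  linarith

lemma Zc.one_sub_u_pos {T a : ℝ} (hT : 0 < T) (ha : 0 < a) : 0 < 1 - Real.exp (-(a * T)) :=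
  Zc.one_sub_exp_pos (mul_pos ha hT)

lemma Zc.hasDerivAt_expneg (c a : ℝ) :
    HasDerivAt (fun b : ℝ => Real.exp (-(b * c))) (-c * Real.exp (-(a * c))) a := by
  have h1 : HasDerivAt (fun b : ℝ => -(b * c)) (-c) a := (hasDerivAt_mul_const c).neg
  have := (Real.hasDerivAt_exp (-(a * c))).comp a h1
  exact this.congr_deriv (by ring)

lemma Zc.hasDerivAt_expneg' (c a : ℝ) :
    HasDerivAt (fun b : ℝ => Real.exp (-(c * b))) (-c * Real.exp (-(c * a))) a := by
  have h1 : HasDerivAt (fun b : ℝ => -(c * b)) (-c) a := by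
    exact (((hasDerivAt_id a).const_mul c).neg).congr_deriv (by ring)
  have := (Real.hasDerivAt_exp (-(c * a))).comp a h1
  exact this.congr_deriv (by ring)

/-! ### Second divided differences -/

noncomputable def S3 (f : ℝ → ℝ) (x y z : ℝ) : ℝ :=
  f x / ((y - x) * (z - x)) + f y / ((x - y) * (z - y)) + f z / ((x - z) * (y - z))

lemma S3_key (f : ℝ → ℝ) {x y z : ℝ} (hxy : x < y) (hyz : y < z) :
    S3 f x y z = ((f z - f y) / (z - y) - (f y - f x) / (y - x)) / (z - x) := by
  unfold S3
  have h1 : y - x ≠ 0 := by linarith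
  have h2 : z - x ≠ 0 := by linarith
  have h3 : z - y ≠ 0 := by linarith
  have h4 : x - y ≠ 0 := by linarith
  have h5 : x - z ≠ 0 := by linarith
  have h6 : y - z ≠ 0 := by linarith
  field_simp
  ring

lemma S3_pos_sorted {f f' : ℝ → ℝ} (hd : ∀ a ∈ Ioi (0:ℝ), HasDerivAt f (f' a) a)
    (hmono : StrictMonoOn f' (Ioi 0)) {x y z : ℝ} (hx : 0 < x) (hxy : x < y) (hyz : y < z) :
    0 < S3 f x y z := by
  have hy : 0 < y := hx.trans hxy
  have hcont : ∀ u v : ℝ, 0 < u → ContinuousOn f (Icc u v) := by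
    intro u v hu w hw
    exact ((hd w (lt_of_lt_of_le hu hw.1)).continuousAt).continuousWithinAt
  obtain ⟨c₁, hc₁, hs₁⟩ := exists_hasDerivAt_eq_slope f f' hxy (hcont x y hx)
    (fun w hw => hd w (hx.trans hw.1))
  obtain ⟨c₂, hc₂, hs₂⟩ := exists_hasDerivAt_eq_slope f f' hyz (hcont y z hy)
    (fun w hw => hd w (hy.trans hw.1))
  have hcc : f' c₁ < f' c₂ :=
    hmono (hx.trans hc₁.1) ((hx.trans hc₁.1).trans (hc₁.2.trans hc₂.1))
      (hc₁.2.trans hc₂.1)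
  rw [S3_key f hxy hyz, ← hs₁, ← hs₂]
  apply div_pos (by linarith) (by linarith)

lemma S3_nonneg_sorted {f f' : ℝ → ℝ} (hd : ∀ a ∈ Ioi (0:ℝ), HasDerivAt f (f' a) a)
    (hmono : MonotoneOn f' (Ioi 0)) {x y z : ℝ} (hx : 0 < x) (hxy : x < y) (hyz : y < z) :
    0 ≤ S3 f x y z := by
  have hy : 0 < y := hx.trans hxy
  have hcont : ∀ u v : ℝ, 0 < u → ContinuousOn f (Icc u v) := by
    intro u v hu w hw
    exact ((hd w (lt_of_lt_of_le hu hw.1)).continuousAt).continuousWithinAt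
  obtain ⟨c₁, hc₁, hs₁⟩ := exists_hasDerivAt_eq_slope f f' hxy (hcont x y hx)
    (fun w hw => hd w (hx.trans hw.1))
  obtain ⟨c₂, hc₂, hs₂⟩ := exists_hasDerivAt_eq_slope f f' hyz (hcont y z hy)
    (fun w hw => hd w (hy.trans hw.1))
  have hcc : f' c₁ ≤ f' c₂ :=
    hmono (hx.trans hc₁.1) ((hx.trans hc₁.1).trans (hc₁.2.trans hc₂.1))
      (hc₁.2.trans hc₂.1).le
  rw [S3_key f hxy hyz, ← hs₁, ← hs₂]
  apply div_nonneg (by linarith) (by linarith)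

lemma S3_swap12 (f : ℝ → ℝ) (x y z : ℝ) : S3 f x y z = S3 f y x z := by
  unfold S3; ring

lemma S3_swap23 (f : ℝ → ℝ) (x y z : ℝ) : S3 f x y z = S3 f x z y := by
  unfold S3; ring

lemma S3_pos {f f' : ℝ → ℝ} (hd : ∀ a ∈ Ioi (0:ℝ), HasDerivAt f (f' a) a)
    (hmono : StrictMonoOn f' (Ioi 0)) {x y z : ℝ} (hx : 0 < x) (hy : 0 < y) (hz : 0 < z)
    (hxy : x ≠ y) (hxz : x ≠ z) (hyz : y ≠ z) : 0 < S3 f x y z := by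
  rcases lt_trichotomy x y with h1 | h1 | h1
  · rcases lt_trichotomy y z with h2 | h2 | h2
    · exact S3_pos_sorted hd hmono hx h1 h2
    · exact absurd h2 hyz
    · rcases lt_trichotomy x z with h3 | h3 | h3
      · rw [S3_swap23]; exact S3_pos_sorted hd hmono hx h3 h2
      · exact absurd h3 hxz
      · rw [S3_swap23, S3_swap12]; exact S3_pos_sorted hd hmono hz h3 h1
  · exact absurd h1 hxy
  · rcases lt_trichotomy x z with h2 | h2 | h2
    · rw [S3_swap12]; exact S3_pos_sorted hd hmono hy h1 h2
    · exact absurd h2 hxz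
    · rcases lt_trichotomy y z with h3 | h3 | h3
      · rw [S3_swap12, S3_swap23]; exact S3_pos_sorted hd hmono hy h3 h2
      · exact absurd h3 hyz
      · rw [S3_swap23, S3_swap12, S3_swap23]; exact S3_pos_sorted hd hmono hz h3 h1

lemma S3_nonneg {f f' : ℝ → ℝ} (hd : ∀ a ∈ Ioi (0:ℝ), HasDerivAt f (f' a) a)
    (hmono : MonotoneOn f' (Ioi 0)) {x y z : ℝ} (hx : 0 < x) (hy : 0 < y) (hz : 0 < z)
    (hxy : x ≠ y) (hxz : x ≠ z) (hyz : y ≠ z) : 0 ≤ S3 f x y z := by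
  rcases lt_trichotomy x y with h1 | h1 | h1
  · rcases lt_trichotomy y z with h2 | h2 | h2
    · exact S3_nonneg_sorted hd hmono hx h1 h2
    · exact absurd h2 hyz
    · rcases lt_trichotomy x z with h3 | h3 | h3
      · rw [S3_swap23]; exact S3_nonneg_sorted hd hmono hx h3 h2
      · exact absurd h3 hxz
      · rw [S3_swap23, S3_swap12]; exact S3_nonneg_sorted hd hmono hz h3 h1
  · exact absurd h1 hxy
  · rcases lt_trichotomy x z with h2 | h2 | h2
    · rw [S3_swap12]; exact S3_nonneg_sorted hd hmono hy h1 h2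
    · exact absurd h2 hxz
    · rcases lt_trichotomy y z with h3 | h3 | h3
      · rw [S3_swap12, S3_swap23]; exact S3_nonneg_sorted hd hmono hy h3 h2
      · exact absurd h3 hyz
      · rw [S3_swap23, S3_swap12, S3_swap23]; exact S3_nonneg_sorted hd hmono hz h3 h1

/-! ### The two scalar convex functions -/

noncomputable def rF (τ T a : ℝ) : ℝ := Real.exp (-(a * τ)) / (1 - Real.exp (-(a * T)))

noncomputable def rF' (τ T a : ℝ) : ℝ :=
  -(Real.exp (-(a * τ)) * (τ * (1 - Real.exp (-(a * T))) + T * Real.exp (-(a * T)))) /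
    (1 - Real.exp (-(a * T))) ^ 2

noncomputable def rF'' (τ T a : ℝ) : ℝ :=
  Real.exp (-(a * τ)) * ((τ + (T - τ) * Real.exp (-(a * T))) ^ 2 + T ^ 2 * Real.exp (-(a * T))) /
    (1 - Real.exp (-(a * T))) ^ 3

noncomputable def hF (T a : ℝ) : ℝ :=
  a * Real.exp (-(a * T)) / (1 - Real.exp (-(a * T)))

noncomputable def hF' (T a : ℝ) : ℝ :=
  Real.exp (-(a * T)) * (1 - Real.exp (-(a * T)) - a * T) / (1 - Real.exp (-(a * T))) ^ 2

noncomputable def hF'' (T a : ℝ) : ℝ :=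
  T * Real.exp (-(a * T)) *
    (a * T + a * T * Real.exp (-(a * T)) + 2 * Real.exp (-(a * T)) - 2) /
    (1 - Real.exp (-(a * T))) ^ 3

section ScalarFuns

variable {T : ℝ} (τ : ℝ) (hT : 0 < T)

include hT

lemma rF_hasDeriv {a : ℝ} (ha : 0 < a) : HasDerivAt (rF τ T) (rF' τ T a) a := by
  have hne : 1 - Real.exp (-(a * T)) ≠ 0 := (Zc.one_sub_u_pos hT ha).ne'
  have hv := Zc.hasDerivAt_expneg τ a
  have hden : HasDerivAt (fun b : ℝ => 1 - Real.exp (-(b * T))) (T * Real.exp (-(a * T))) a := by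
    have := (Zc.hasDerivAt_expneg T a).const_sub 1
    refine this.congr_deriv ?_; ring
  have := hv.div hden hne
  refine this.congr_deriv ?_
  unfold rF'
  field_simp
  ring

lemma rF'_hasDeriv {a : ℝ} (ha : 0 < a) : HasDerivAt (rF' τ T) (rF'' τ T a) a := by
  have hpos := Zc.one_sub_u_pos hT ha
  have hne : 1 - Real.exp (-(a * T)) ≠ 0 := hpos.ne'
  have hne2 : ((1 - Real.exp (-(a * T))) ^ 2) ≠ 0 := pow_ne_zero _ hne
  have hv := Zc.hasDerivAt_expneg τ a
  have hu := Zc.hasDerivAt_expneg T a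
  have hden : HasDerivAt (fun b : ℝ => 1 - Real.exp (-(b * T))) (T * Real.exp (-(a * T))) a := by
    have := (Zc.hasDerivAt_expneg T a).const_sub 1
    refine this.congr_deriv ?_; ring
  have hinner : HasDerivAt
      (fun b : ℝ => τ * (1 - Real.exp (-(b * T))) + T * Real.exp (-(b * T)))
      (τ * (T * Real.exp (-(a * T))) + T * (-T * Real.exp (-(a * T)))) a :=
    (hden.const_mul τ).add (hu.const_mul T)
  have hN : HasDerivAt
      (fun b : ℝ => -(Real.exp (-(b * τ)) *
        (τ * (1 - Real.exp (-(b * T))) + T * Real.exp (-(b * T)))))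
      (-((-τ * Real.exp (-(a * τ))) * (τ * (1 - Real.exp (-(a * T))) + T * Real.exp (-(a * T))) +
        Real.exp (-(a * τ)) * (τ * (T * Real.exp (-(a * T))) + T * (-T * Real.exp (-(a * T)))))) a :=
    (hv.mul hinner).neg
  have hD2 : HasDerivAt (fun b : ℝ => (1 - Real.exp (-(b * T))) ^ 2)
      (2 * (1 - Real.exp (-(a * T))) ^ 1 * (T * Real.exp (-(a * T)))) a := hden.pow 2
  have := hN.div hD2 hne2
  refine this.congr_deriv ?_
  unfold rF''
  field_simp
  ring

lemma rF'_neg (hτ : 0 ≤ τ) {a : ℝ} (ha : 0 < a) : rF' τ T a < 0 := by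
  have hpos := Zc.one_sub_u_pos hT ha
  have hu := Real.exp_pos (-(a * T))
  have hv := Real.exp_pos (-(a * τ))
  apply div_neg_of_neg_of_pos
  · have h1 : 0 ≤ τ * (1 - Real.exp (-(a * T))) := mul_nonneg hτ hpos.le
    have h2 : 0 < T * Real.exp (-(a * T)) := mul_pos hT hu
    nlinarith
  · positivity

lemma rF''_pos {a : ℝ} (ha : 0 < a) : 0 < rF'' τ T a := by
  have hpos := Zc.one_sub_u_pos hT ha
  have hu := Real.exp_pos (-(a * T))
  have hv := Real.exp_pos (-(a * τ))
  apply div_pos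
  · apply mul_pos hv
    have : 0 < T ^ 2 * Real.exp (-(a * T)) := by positivity
    nlinarith [sq_nonneg (τ + (T - τ) * Real.exp (-(a * T)))]
  · positivity

lemma rF'_strictMono : StrictMonoOn (rF' τ T) (Ioi 0) := by
  refine strictMonoOn_of_deriv_pos (convex_Ioi 0)
    (fun y hy => ((rF'_hasDeriv τ hT hy).continuousAt).continuousWithinAt) (fun y hy => ?_)
  rw [interior_Ioi] at hy
  rw [(rF'_hasDeriv τ hT hy).deriv]
  exact rF''_pos τ hT hy

lemma rF_strictAnti (hτ : 0 ≤ τ) : StrictAntiOn (rF τ T) (Ioi 0) := by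
  refine strictAntiOn_of_deriv_neg (convex_Ioi 0)
    (fun y hy => ((rF_hasDeriv τ hT hy).continuousAt).continuousWithinAt) (fun y hy => ?_)
  rw [interior_Ioi] at hy
  rw [(rF_hasDeriv τ hT hy).deriv]
  exact rF'_neg τ hT hτ hy

lemma hF_hasDeriv {a : ℝ} (ha : 0 < a) : HasDerivAt (hF T) (hF' T a) a := by
  have hne : 1 - Real.exp (-(a * T)) ≠ 0 := (Zc.one_sub_u_pos hT ha).ne'
  have hu := Zc.hasDerivAt_expneg T a
  have hden : HasDerivAt (fun b : ℝ => 1 - Real.exp (-(b * T))) (T * Real.exp (-(a * T))) a := by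
    have := (Zc.hasDerivAt_expneg T a).const_sub 1
    refine this.congr_deriv ?_; ring
  have hN : HasDerivAt (fun b : ℝ => b * Real.exp (-(b * T)))
      (1 * Real.exp (-(a * T)) + a * (-T * Real.exp (-(a * T)))) a := (hasDerivAt_id a).mul hu
  have := hN.div hden hne
  refine this.congr_deriv ?_
  unfold hF'
  field_simp
  ring

lemma hF'_hasDeriv {a : ℝ} (ha : 0 < a) : HasDerivAt (hF' T) (hF'' T a) a := by
  have hpos := Zc.one_sub_u_pos hT ha
  have hne : 1 - Real.exp (-(a * T)) ≠ 0 := hpos.ne'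
  have hne2 : ((1 - Real.exp (-(a * T))) ^ 2) ≠ 0 := pow_ne_zero _ hne
  have hu := Zc.hasDerivAt_expneg T a
  have hden : HasDerivAt (fun b : ℝ => 1 - Real.exp (-(b * T))) (T * Real.exp (-(a * T))) a := by
    have := (Zc.hasDerivAt_expneg T a).const_sub 1
    refine this.congr_deriv ?_; ring
  have hinner : HasDerivAt (fun b : ℝ => 1 - Real.exp (-(b * T)) - b * T)
      (T * Real.exp (-(a * T)) - T) a := by
    have := hden.sub (hasDerivAt_mul_const T)
    exact this.congr_deriv rfl
  have hN : HasDerivAt (fun b : ℝ => Real.exp (-(b * T)) * (1 - Real.exp (-(b * T)) - b * T))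
      ((-T * Real.exp (-(a * T))) * (1 - Real.exp (-(a * T)) - a * T) +
        Real.exp (-(a * T)) * (T * Real.exp (-(a * T)) - T)) a := hu.mul hinner
  have hD2 : HasDerivAt (fun b : ℝ => (1 - Real.exp (-(b * T))) ^ 2)
      (2 * (1 - Real.exp (-(a * T))) ^ 1 * (T * Real.exp (-(a * T)))) a := hden.pow 2
  have := hN.div hD2 hne2
  refine this.congr_deriv ?_
  unfold hF''
  field_simp
  ring

lemma hF'_neg {a : ℝ} (ha : 0 < a) : hF' T a < 0 := by
  have hpos := Zc.one_sub_u_pos hT ha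
  have hu := Real.exp_pos (-(a * T))
  have hlt : 1 - Real.exp (-(a * T)) < a * T := Zc.one_sub_exp_lt (mul_pos ha hT)
  apply div_neg_of_neg_of_pos
  · exact mul_neg_of_pos_of_neg hu (by linarith)
  · positivity

lemma hF''_pos {a : ℝ} (ha : 0 < a) : 0 < hF'' T a := by
  have hpos := Zc.one_sub_u_pos hT ha
  have hu := Real.exp_pos (-(a * T))
  have hp := Zc.pade (mul_pos ha hT)
  apply div_pos
  · apply mul_pos (by positivity)
    linarith
  · positivity

lemma hF'_strictMono : StrictMonoOn (hF' T) (Ioi 0) := by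
  refine strictMonoOn_of_deriv_pos (convex_Ioi 0)
    (fun y hy => ((hF'_hasDeriv hT hy).continuousAt).continuousWithinAt) (fun y hy => ?_)
  rw [interior_Ioi] at hy
  rw [(hF'_hasDeriv hT hy).deriv]
  exact hF''_pos hT hy

lemma hF_strictAnti : StrictAntiOn (hF T) (Ioi 0) := by
  refine strictAntiOn_of_deriv_neg (convex_Ioi 0)
    (fun y hy => ((hF_hasDeriv hT hy).continuousAt).continuousWithinAt) (fun y hy => ?_)
  rw [interior_Ioi] at hy
  rw [(hF_hasDeriv hT hy).deriv]
  exact hF'_neg hT hy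

end ScalarFuns

lemma gF_mono {σ : ℝ} (hσ : 0 ≤ σ) :
    MonotoneOn (fun a : ℝ => -σ * Real.exp (-(a * σ))) (Ioi (0:ℝ)) := by
  intro x _ y _ hxy
  simp only
  have : Real.exp (-(y * σ)) ≤ Real.exp (-(x * σ)) := by
    apply Real.exp_le_exp.mpr
    nlinarith
  nlinarith [Real.exp_pos (-(x * σ)), Real.exp_pos (-(y * σ))]

/-! ### The scalar z function and its T-derivative -/

noncomputable def Zs (a₁ a₂ a₃ g₁ g₂ τ T : ℝ) : ℝ := g₁ * g₂ * S3 (rF τ T) a₁ a₂ a₃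

noncomputable def DZs (a₁ a₂ a₃ g₁ g₂ τ T : ℝ) : ℝ :=
  g₁ * g₂ *
    S3 (fun a => -a * Real.exp (-(a * (T + τ))) / (1 - Real.exp (-(a * T))) ^ 2) a₁ a₂ a₃

lemma decomp3 (a₁ a₂ a₃ r₁ r₂ r₃ q₁ q₂ q₃ : ℝ)
    (d₁₂ : a₂ - a₁ ≠ 0) (d₁₃ : a₃ - a₁ ≠ 0) (d₂₃ : a₃ - a₂ ≠ 0) :
    -(a₁ * q₁ * r₁) / ((a₂ - a₁) * (a₃ - a₁)) + -(a₂ * q₂ * r₂) / ((a₁ - a₂) * (a₃ - a₂)) +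
      -(a₃ * q₃ * r₃) / ((a₁ - a₃) * (a₂ - a₃)) =
    (r₁ / ((a₂ - a₁) * (a₃ - a₁)) + r₂ / ((a₁ - a₂) * (a₃ - a₂)) +
        r₃ / ((a₁ - a₃) * (a₂ - a₃))) * (-(a₁ * q₁)) +
      (r₂ - r₃) / (a₃ - a₂) * ((a₂ * q₂ - a₁ * q₁) / (a₂ - a₁)) +
      r₃ * (-(a₁ * q₁ / ((a₂ - a₁) * (a₃ - a₁)) + a₂ * q₂ / ((a₁ - a₂) * (a₃ - a₂)) +
        a₃ * q₃ / ((a₁ - a₃) * (a₂ - a₃)))) := by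
  have d₂₁ : a₁ - a₂ ≠ 0 := fun h => d₁₂ (by linarith [sub_eq_zero.mp h])
  have d₃₁ : a₁ - a₃ ≠ 0 := fun h => d₁₃ (by linarith [sub_eq_zero.mp h])
  have d₃₂ : a₂ - a₃ ≠ 0 := fun h => d₂₃ (by linarith [sub_eq_zero.mp h])
  field_simp
  ring

section MainScalar

variable {a₁ a₂ a₃ g₁ g₂ : ℝ}
  (ha₁ : 0 < a₁) (ha₂ : 0 < a₂) (ha₃ : 0 < a₃)
  (h₁₂ : a₁ ≠ a₂) (h₁₃ : a₁ ≠ a₃) (h₂₃ : a₂ ≠ a₃)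
  (hg₁ : 0 < g₁) (hg₂ : 0 < g₂)

include ha₁ ha₂ ha₃ h₁₂ h₁₃ h₂₃ hg₁ hg₂

lemma DZs_neg {τ T : ℝ} (hτ : 0 ≤ τ) (hT : 0 < T) : DZs a₁ a₂ a₃ g₁ g₂ τ T < 0 := by
  have d₁₂ : a₂ - a₁ ≠ 0 := sub_ne_zero.mpr (Ne.symm h₁₂)
  have d₁₃ : a₃ - a₁ ≠ 0 := sub_ne_zero.mpr (Ne.symm h₁₃)
  have d₂₃ : a₃ - a₂ ≠ 0 := sub_ne_zero.mpr (Ne.symm h₂₃)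
  have e₁ := Zc.one_sub_u_pos hT ha₁
  have e₂ := Zc.one_sub_u_pos hT ha₂
  have e₃ := Zc.one_sub_u_pos hT ha₃
  set q₁ : ℝ := Real.exp (-(a₁ * T)) / (1 - Real.exp (-(a₁ * T))) with hq₁
  set q₂ : ℝ := Real.exp (-(a₂ * T)) / (1 - Real.exp (-(a₂ * T))) with hq₂
  set q₃ : ℝ := Real.exp (-(a₃ * T)) / (1 - Real.exp (-(a₃ * T))) with hq₃
  have t₁ : -a₁ * Real.exp (-(a₁ * (T + τ))) / (1 - Real.exp (-(a₁ * T))) ^ 2 =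
      -(a₁ * q₁ * rF τ T a₁) := by
    rw [hq₁, rF, show -(a₁ * (T + τ)) = -(a₁ * T) + -(a₁ * τ) by ring, Real.exp_add]
    field_simp
  have t₂ : -a₂ * Real.exp (-(a₂ * (T + τ))) / (1 - Real.exp (-(a₂ * T))) ^ 2 =
      -(a₂ * q₂ * rF τ T a₂) := by
    rw [hq₂, rF, show -(a₂ * (T + τ)) = -(a₂ * T) + -(a₂ * τ) by ring, Real.exp_add]
    field_simp
  have t₃ : -a₃ * Real.exp (-(a₃ * (T + τ))) / (1 - Real.exp (-(a₃ * T))) ^ 2 =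
      -(a₃ * q₃ * rF τ T a₃) := by
    rw [hq₃, rF, show -(a₃ * (T + τ)) = -(a₃ * T) + -(a₃ * τ) by ring, Real.exp_add]
    field_simp
  have f₁ : hF T a₁ = a₁ * q₁ := by rw [hq₁, hF]; ring
  have f₂ : hF T a₂ = a₂ * q₂ := by rw [hq₂, hF]; ring
  have f₃ : hF T a₃ = a₃ * q₃ := by rw [hq₃, hF]; ring
  have key : DZs a₁ a₂ a₃ g₁ g₂ τ T = g₁ * g₂ *
      (S3 (rF τ T) a₁ a₂ a₃ * (-(hF T a₁)) +
        (rF τ T a₂ - rF τ T a₃) / (a₃ - a₂) * ((hF T a₂ - hF T a₁) / (a₂ - a₁)) +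
        rF τ T a₃ * (-(S3 (hF T) a₁ a₂ a₃))) := by
    simp only [DZs, S3]
    rw [t₁, t₂, t₃, decomp3 a₁ a₂ a₃ (rF τ T a₁) (rF τ T a₂) (rF τ T a₃) q₁ q₂ q₃ d₁₂ d₁₃ d₂₃,
      f₁, f₂, f₃]
  rw [key]
  have hS3r : 0 < S3 (rF τ T) a₁ a₂ a₃ :=
    S3_pos (fun a ha => rF_hasDeriv τ hT ha) (rF'_strictMono τ hT) ha₁ ha₂ ha₃ h₁₂ h₁₃ h₂₃
  have hS3h : 0 < S3 (hF T) a₁ a₂ a₃ :=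
    S3_pos (fun a ha => hF_hasDeriv hT ha) (hF'_strictMono hT) ha₁ ha₂ ha₃ h₁₂ h₁₃ h₂₃
  have hrpos : ∀ a : ℝ, 0 < a → 0 < rF τ T a := fun a ha =>
    div_pos (Real.exp_pos _) (Zc.one_sub_u_pos hT ha)
  have hhpos : 0 < hF T a₁ :=
    div_pos (mul_pos ha₁ (Real.exp_pos _)) (Zc.one_sub_u_pos hT ha₁)
  have hM21 : 0 < (rF τ T a₂ - rF τ T a₃) / (a₃ - a₂) := by
    rcases lt_or_gt_of_ne h₂₃ with h | h
    · exact div_pos (sub_pos.mpr (rF_strictAnti τ hT hτ ha₂ ha₃ h)) (sub_pos.mpr h)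
    · have h1 : rF τ T a₂ - rF τ T a₃ < 0 := sub_neg.mpr (rF_strictAnti τ hT hτ ha₃ ha₂ h)
      have h2 : a₃ - a₂ < 0 := sub_neg.mpr h
      exact div_pos_of_neg_of_neg h1 h2
  have hAX1 : (hF T a₂ - hF T a₁) / (a₂ - a₁) < 0 := by
    rcases lt_or_gt_of_ne h₁₂ with h | h
    · exact div_neg_of_neg_of_pos (sub_neg.mpr (hF_strictAnti hT ha₁ ha₂ h)) (sub_pos.mpr h)
    · exact div_neg_of_pos_of_neg (sub_pos.mpr (hF_strictAnti hT ha₂ ha₁ h)) (sub_neg.mpr h)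
  have term1 : S3 (rF τ T) a₁ a₂ a₃ * (-(hF T a₁)) < 0 :=
    mul_neg_of_pos_of_neg hS3r (by linarith)
  have term2 : (rF τ T a₂ - rF τ T a₃) / (a₃ - a₂) * ((hF T a₂ - hF T a₁) / (a₂ - a₁)) < 0 :=
    mul_neg_of_pos_of_neg hM21 hAX1
  have term3 : rF τ T a₃ * (-(S3 (hF T) a₁ a₂ a₃)) < 0 :=
    mul_neg_of_pos_of_neg (hrpos a₃ ha₃) (by linarith)
  have : (S3 (rF τ T) a₁ a₂ a₃ * (-(hF T a₁)) +
      (rF τ T a₂ - rF τ T a₃) / (a₃ - a₂) * ((hF T a₂ - hF T a₁) / (a₂ - a₁)) +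
      rF τ T a₃ * (-(S3 (hF T) a₁ a₂ a₃))) < 0 := by linarith
  exact mul_neg_of_pos_of_neg (mul_pos hg₁ hg₂) this

lemma Zs_hasDerivT {τ T : ℝ} (hT : 0 < T) :
    HasDerivAt (fun t => Zs a₁ a₂ a₃ g₁ g₂ τ t) (DZs a₁ a₂ a₃ g₁ g₂ τ T) T := by
  have term : ∀ a : ℝ, 0 < a →
      HasDerivAt (fun t => Real.exp (-(a * τ)) / (1 - Real.exp (-(a * t))))
        (-a * Real.exp (-(a * (T + τ))) / (1 - Real.exp (-(a * T))) ^ 2) T := by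
    intro a ha
    have hne : 1 - Real.exp (-(a * T)) ≠ 0 := (Zc.one_sub_u_pos hT ha).ne'
    have hden : HasDerivAt (fun t : ℝ => 1 - Real.exp (-(a * t)))
        (a * Real.exp (-(a * T))) T := by
      have := (Zc.hasDerivAt_expneg' a T).const_sub 1
      refine this.congr_deriv ?_; ring
    have := (hasDerivAt_const T (Real.exp (-(a * τ)))).div hden hne
    refine this.congr_deriv ?_
    rw [show -(a * (T + τ)) = -(a * T) + -(a * τ) by ring, Real.exp_add]
    field_simp
    ring
  have h1 := term a₁ ha₁
  have h2 := term a₂ ha₂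
  have h3 := term a₃ ha₃
  have := (((h1.div_const ((a₂ - a₁) * (a₃ - a₁))).add
    (h2.div_const ((a₁ - a₂) * (a₃ - a₂)))).add
    (h3.div_const ((a₁ - a₃) * (a₂ - a₃)))).const_mul (g₁ * g₂)
  simpa [Zs, DZs, S3, rF] using this

lemma Zs_strictAntiT {τ : ℝ} (hτ : 0 ≤ τ) :
    StrictAntiOn (fun t => Zs a₁ a₂ a₃ g₁ g₂ τ t) (Ioi 0) := by
  refine strictAntiOn_of_deriv_neg (convex_Ioi 0)
    (fun t ht => ((Zs_hasDerivT ha₁ ha₂ ha₃ h₁₂ h₁₃ h₂₃ hg₁ hg₂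
      (ht : (0:ℝ) < t)).continuousAt).continuousWithinAt) (fun t ht => ?_)
  rw [interior_Ioi] at ht
  rw [(Zs_hasDerivT ha₁ ha₂ ha₃ h₁₂ h₁₃ h₂₃ hg₁ hg₂ ht).deriv]
  exact DZs_neg ha₁ ha₂ ha₃ h₁₂ h₁₃ h₂₃ hg₁ hg₂ hτ ht

lemma Zs_shift {σ T : ℝ} (hT : 0 < T) :
    Zs a₁ a₂ a₃ g₁ g₂ (σ + T) T =
    Zs a₁ a₂ a₃ g₁ g₂ σ T -
      g₁ * g₂ * S3 (fun a => Real.exp (-(a * σ))) a₁ a₂ a₃ := by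
  have e₁ := (Zc.one_sub_u_pos hT ha₁).ne'
  have e₂ := (Zc.one_sub_u_pos hT ha₂).ne'
  have e₃ := (Zc.one_sub_u_pos hT ha₃).ne'
  have key : ∀ a : ℝ, 1 - Real.exp (-(a * T)) ≠ 0 →
      rF (σ + T) T a = rF σ T a - Real.exp (-(a * σ)) := by
    intro a hne
    rw [rF, rF, show -(a * (σ + T)) = -(a * σ) + -(a * T) by ring, Real.exp_add]
    field_simp
    ring
  unfold Zs S3
  rw [key a₁ e₁, key a₂ e₂, key a₃ e₃]
  ring

lemma Zs_fold {σ T : ℝ} (hσ : 0 ≤ σ) (hT : 0 < T) :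
    ∀ k : ℕ, Zs a₁ a₂ a₃ g₁ g₂ (σ + k * T) T ≤ Zs a₁ a₂ a₃ g₁ g₂ σ T := by
  intro k
  induction k with
  | zero => simp
  | succ k ih =>
    have harg : σ + ((k:ℕ) + 1 : ℕ) * T = (σ + k * T) + T := by push_cast; ring
    rw [harg, Zs_shift ha₁ ha₂ ha₃ h₁₂ h₁₃ h₂₃ hg₁ hg₂ hT]
    have hkT : 0 ≤ σ + k * T := by positivity
    have hS3g : 0 ≤ S3 (fun a => Real.exp (-(a * (σ + k * T)))) a₁ a₂ a₃ := by
      refine S3_nonneg (f' := fun a => -(σ + k * T) * Real.exp (-(a * (σ + k * T))))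
        (fun a _ => Zc.hasDerivAt_expneg (σ + k * T) a) (gF_mono hkT)
        ha₁ ha₂ ha₃ h₁₂ h₁₃ h₂₃
    nlinarith [mul_pos hg₁ hg₂]

end MainScalar

/-! ### Matrix diagonalization -/

noncomputable def Pm (a₁ a₂ a₃ g₁ g₂ : ℝ) : Matrix (Fin 3) (Fin 3) ℝ :=
  !![1, 0, 0;
     g₁ / (a₂ - a₁), 1, 0;
     g₁ * g₂ / ((a₂ - a₁) * (a₃ - a₁)), g₂ / (a₃ - a₂), 1]

noncomputable def Qm (a₁ a₂ a₃ g₁ g₂ : ℝ) : Matrix (Fin 3) (Fin 3) ℝ :=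
  !![1, 0, 0;
     -(g₁ / (a₂ - a₁)), 1, 0;
     g₁ * g₂ / ((a₃ - a₁) * (a₃ - a₂)), -(g₂ / (a₃ - a₂)), 1]

noncomputable def Dg (x y z : ℝ) : Matrix (Fin 3) (Fin 3) ℝ := Matrix.diagonal ![x, y, z]

lemma Dg_one : Dg 1 1 1 = 1 := by
  ext i j; fin_cases i <;> fin_cases j <;> simp [Dg, Matrix.one_apply]

lemma Dg_eq (x y z : ℝ) : Dg x y z = !![x, 0, 0; 0, y, 0; 0, 0, z] := by
  ext i j
  fin_cases i <;> fin_cases j <;>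
    simp [Dg, Matrix.diagonal, Matrix.vecHead, Matrix.vecTail]

lemma Dg_mul (x y z x' y' z' : ℝ) :
    Dg x y z * Dg x' y' z' = Dg (x * x') (y * y') (z * z') := by
  ext i j
  fin_cases i <;> fin_cases j <;>
    simp [Dg, Matrix.mul_apply, Fin.sum_univ_three]

lemma Dg_sub (x y z x' y' z' : ℝ) :
    Dg x y z - Dg x' y' z' = Dg (x - x') (y - y') (z - z') := by
  ext i j
  fin_cases i <;> fin_cases j <;> simp [Dg, Matrix.one_apply]

lemma Dg_smul (t x y z : ℝ) : t • Dg x y z = Dg (t * x) (t * y) (t * z) := by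
  ext i j
  fin_cases i <;> fin_cases j <;> simp [Dg]

lemma Dg_exp (x y z : ℝ) :
    NormedSpace.exp (Dg x y z) = Dg (Real.exp x) (Real.exp y) (Real.exp z) := by
  have hv : (NormedSpace.exp (![x, y, z] : Fin 3 → ℝ)) =
      ![Real.exp x, Real.exp y, Real.exp z] := by
    funext i
    fin_cases i <;> simp [Pi.coe_exp, ← Real.exp_eq_exp_ℝ]
  rw [Dg, Matrix.exp_diagonal, hv, Dg]

section MatrixPart

variable {a₁ a₂ a₃ g₁ g₂ : ℝ} (h₁₂ : a₁ ≠ a₂) (h₁₃ : a₁ ≠ a₃) (h₂₃ : a₂ ≠ a₃)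

include h₁₂ h₁₃ h₂₃

lemma hPQ : Pm a₁ a₂ a₃ g₁ g₂ * Qm a₁ a₂ a₃ g₁ g₂ = 1 := by
  have d₁₂ : a₂ - a₁ ≠ 0 := sub_ne_zero.mpr (Ne.symm h₁₂)
  have d₁₃ : a₃ - a₁ ≠ 0 := sub_ne_zero.mpr (Ne.symm h₁₃)
  have d₂₃ : a₃ - a₂ ≠ 0 := sub_ne_zero.mpr (Ne.symm h₂₃)
  ext i j
  fin_cases i <;> fin_cases j <;>
    simp [Pm, Qm, Matrix.mul_apply, Fin.sum_univ_three, Matrix.one_apply] <;>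
    field_simp
  ring

lemma hQP : Qm a₁ a₂ a₃ g₁ g₂ * Pm a₁ a₂ a₃ g₁ g₂ = 1 := by
  have d₁₂ : a₂ - a₁ ≠ 0 := sub_ne_zero.mpr (Ne.symm h₁₂)
  have d₁₃ : a₃ - a₁ ≠ 0 := sub_ne_zero.mpr (Ne.symm h₁₃)
  have d₂₃ : a₃ - a₂ ≠ 0 := sub_ne_zero.mpr (Ne.symm h₂₃)
  ext i j
  fin_cases i <;> fin_cases j <;>
    simp [Pm, Qm, Matrix.mul_apply, Fin.sum_univ_three, Matrix.one_apply] <;>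
    field_simp
  ring

lemma hP_isUnit : IsUnit (Pm a₁ a₂ a₃ g₁ g₂) :=
  ⟨⟨Pm a₁ a₂ a₃ g₁ g₂, Qm a₁ a₂ a₃ g₁ g₂, hPQ h₁₂ h₁₃ h₂₃, hQP h₁₂ h₁₃ h₂₃⟩, rfl⟩

lemma hPinv : (Pm a₁ a₂ a₃ g₁ g₂)⁻¹ = Qm a₁ a₂ a₃ g₁ g₂ :=
  Matrix.inv_eq_right_inv (hPQ h₁₂ h₁₃ h₂₃)

lemma hAcas : Acas a₁ a₂ a₃ g₁ g₂ =
    Pm a₁ a₂ a₃ g₁ g₂ * Dg (-a₁) (-a₂) (-a₃) * Qm a₁ a₂ a₃ g₁ g₂ := by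
  have d₁₂ : a₂ - a₁ ≠ 0 := sub_ne_zero.mpr (Ne.symm h₁₂)
  have d₁₃ : a₃ - a₁ ≠ 0 := sub_ne_zero.mpr (Ne.symm h₁₃)
  have d₂₃ : a₃ - a₂ ≠ 0 := sub_ne_zero.mpr (Ne.symm h₂₃)
  ext i j
  fin_cases i <;> fin_cases j <;>
    (try simp [Acas, Pm, Qm, Dg_eq, Matrix.mul_apply, Fin.sum_univ_three]) <;>
    (try field_simp) <;> (try ring)

lemma hMmulM (x y z x' y' z' : ℝ) :
    (Pm a₁ a₂ a₃ g₁ g₂ * Dg x y z * Qm a₁ a₂ a₃ g₁ g₂) *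
      (Pm a₁ a₂ a₃ g₁ g₂ * Dg x' y' z' * Qm a₁ a₂ a₃ g₁ g₂) =
    Pm a₁ a₂ a₃ g₁ g₂ * Dg (x * x') (y * y') (z * z') * Qm a₁ a₂ a₃ g₁ g₂ := by
  calc (Pm a₁ a₂ a₃ g₁ g₂ * Dg x y z * Qm a₁ a₂ a₃ g₁ g₂) *
      (Pm a₁ a₂ a₃ g₁ g₂ * Dg x' y' z' * Qm a₁ a₂ a₃ g₁ g₂)
      = Pm a₁ a₂ a₃ g₁ g₂ * (Dg x y z * (Qm a₁ a₂ a₃ g₁ g₂ * Pm a₁ a₂ a₃ g₁ g₂) * Dg x' y' z') *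
        Qm a₁ a₂ a₃ g₁ g₂ := by noncomm_ring
    _ = Pm a₁ a₂ a₃ g₁ g₂ * Dg (x * x') (y * y') (z * z') * Qm a₁ a₂ a₃ g₁ g₂ := by
        rw [hQP h₁₂ h₁₃ h₂₃, mul_one, Dg_mul]

lemma hMsub1 (x y z : ℝ) :
    1 - Pm a₁ a₂ a₃ g₁ g₂ * Dg x y z * Qm a₁ a₂ a₃ g₁ g₂ =
    Pm a₁ a₂ a₃ g₁ g₂ * Dg (1 - x) (1 - y) (1 - z) * Qm a₁ a₂ a₃ g₁ g₂ := by
  conv_lhs => rw [show (1 : Matrix (Fin 3) (Fin 3) ℝ) =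
    Pm a₁ a₂ a₃ g₁ g₂ * Dg 1 1 1 * Qm a₁ a₂ a₃ g₁ g₂ by rw [Dg_one, mul_one, hPQ h₁₂ h₁₃ h₂₃]]
  rw [← Matrix.sub_mul, ← Matrix.mul_sub, Dg_sub]

lemma hMinv {x y z : ℝ} (hx : x ≠ 0) (hy : y ≠ 0) (hz : z ≠ 0) :
    (Pm a₁ a₂ a₃ g₁ g₂ * Dg x y z * Qm a₁ a₂ a₃ g₁ g₂)⁻¹ =
    Pm a₁ a₂ a₃ g₁ g₂ * Dg x⁻¹ y⁻¹ z⁻¹ * Qm a₁ a₂ a₃ g₁ g₂ := by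
  apply Matrix.inv_eq_right_inv
  rw [hMmulM h₁₂ h₁₃ h₂₃, mul_inv_cancel₀ hx, mul_inv_cancel₀ hy, mul_inv_cancel₀ hz,
    Dg_one, mul_one, hPQ h₁₂ h₁₃ h₂₃]

lemma hexpM (t : ℝ) :
    NormedSpace.exp (t • Acas a₁ a₂ a₃ g₁ g₂) =
    Pm a₁ a₂ a₃ g₁ g₂ *
      Dg (Real.exp (-(a₁ * t))) (Real.exp (-(a₂ * t))) (Real.exp (-(a₃ * t))) *
      Qm a₁ a₂ a₃ g₁ g₂ := by
  have h1 : t • Acas a₁ a₂ a₃ g₁ g₂ =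
      Pm a₁ a₂ a₃ g₁ g₂ * Dg (-(a₁ * t)) (-(a₂ * t)) (-(a₃ * t)) * Qm a₁ a₂ a₃ g₁ g₂ := by
    rw [hAcas h₁₂ h₁₃ h₂₃, ← smul_mul_assoc, ← mul_smul_comm, Dg_smul,
      show t * -a₁ = -(a₁ * t) by ring, show t * -a₂ = -(a₂ * t) by ring,
      show t * -a₃ = -(a₃ * t) by ring]
  rw [h1, ← hPinv h₁₂ h₁₃ h₂₃,
    Matrix.exp_conj (Pm a₁ a₂ a₃ g₁ g₂) _ (hP_isUnit h₁₂ h₁₃ h₂₃),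
    hPinv h₁₂ h₁₃ h₂₃, Dg_exp]

lemma hmulvec2 (x y z : ℝ) :
    ((Pm a₁ a₂ a₃ g₁ g₂ * Dg x y z * Qm a₁ a₂ a₃ g₁ g₂) *ᵥ Bcas) 2 =
    g₁ * g₂ * (x / ((a₂ - a₁) * (a₃ - a₁)) + y / ((a₁ - a₂) * (a₃ - a₂)) +
      z / ((a₁ - a₃) * (a₂ - a₃))) := by
  have d₁₂ : a₂ - a₁ ≠ 0 := sub_ne_zero.mpr (Ne.symm h₁₂)
  have d₁₃ : a₃ - a₁ ≠ 0 := sub_ne_zero.mpr (Ne.symm h₁₃)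
  have d₂₃ : a₃ - a₂ ≠ 0 := sub_ne_zero.mpr (Ne.symm h₂₃)
  have d₂₁ : a₁ - a₂ ≠ 0 := sub_ne_zero.mpr h₁₂
  have d₃₁ : a₁ - a₃ ≠ 0 := sub_ne_zero.mpr h₁₃
  have d₃₂ : a₂ - a₃ ≠ 0 := sub_ne_zero.mpr h₂₃
  show (Pm a₁ a₂ a₃ g₁ g₂ * Dg x y z * Qm a₁ a₂ a₃ g₁ g₂) 2 ⬝ᵥ Bcas = _
  simp [Pm, Qm, Dg_eq, Bcas, Matrix.mul_apply, Fin.sum_univ_three, dotProduct]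
  field_simp
  ring

end MatrixPart

section Bridge

variable {a₁ a₂ a₃ g₁ g₂ : ℝ}
  (ha₁ : 0 < a₁) (ha₂ : 0 < a₂) (ha₃ : 0 < a₃)
  (h₁₂ : a₁ ≠ a₂) (h₁₃ : a₁ ≠ a₃) (h₂₃ : a₂ ≠ a₃)

include ha₁ ha₂ ha₃ h₁₂ h₁₃ h₂₃

lemma zfun_eq (τ : ℝ) {T : ℝ} (hT : 0 < T) :
    zfun a₁ a₂ a₃ g₁ g₂ τ T = Zs a₁ a₂ a₃ g₁ g₂ τ T := by
  have e₁ := (Zc.one_sub_u_pos hT ha₁).ne'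
  have e₂ := (Zc.one_sub_u_pos hT ha₂).ne'
  have e₃ := (Zc.one_sub_u_pos hT ha₃).ne'
  unfold zfun
  rw [hexpM h₁₂ h₁₃ h₂₃ τ, hexpM h₁₂ h₁₃ h₂₃ T, hMsub1 h₁₂ h₁₃ h₂₃,
    hMinv h₁₂ h₁₃ h₂₃ e₁ e₂ e₃, hMmulM h₁₂ h₁₃ h₂₃, hmulvec2 h₁₂ h₁₃ h₂₃]
  unfold Zs S3 rF
  ring

lemma Dexpr_eq (τ : ℝ) {T : ℝ} (hT : 0 < T) :
    ((Acas a₁ a₂ a₃ g₁ g₂ *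
      NormedSpace.exp ((T + τ) • Acas a₁ a₂ a₃ g₁ g₂) *
      ((1 - NormedSpace.exp (T • Acas a₁ a₂ a₃ g₁ g₂))⁻¹) ^ 2) *ᵥ Bcas) 2 =
    DZs a₁ a₂ a₃ g₁ g₂ τ T := by
  have e₁ := (Zc.one_sub_u_pos hT ha₁).ne'
  have e₂ := (Zc.one_sub_u_pos hT ha₂).ne'
  have e₃ := (Zc.one_sub_u_pos hT ha₃).ne'
  rw [hexpM h₁₂ h₁₃ h₂₃ (T + τ), hexpM h₁₂ h₁₃ h₂₃ T,
    hMsub1 h₁₂ h₁₃ h₂₃, hMinv h₁₂ h₁₃ h₂₃ e₁ e₂ e₃, hAcas h₁₂ h₁₃ h₂₃]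
  simp only [pow_two, hMmulM h₁₂ h₁₃ h₂₃]
  rw [hmulvec2 h₁₂ h₁₃ h₂₃]
  unfold DZs S3
  simp only [pow_two, mul_inv, div_eq_mul_inv]

end Bridge

theorem zmin_zmax_decreasing (a₁ a₂ a₃ g₁ g₂ : ℝ)
    (ha₁ : 0 < a₁) (ha₂ : 0 < a₂) (ha₃ : 0 < a₃)
    (h₁₂ : a₁ ≠ a₂) (h₁₃ : a₁ ≠ a₃) (h₂₃ : a₂ ≠ a₃)
    (hg₁ : 0 < g₁) (hg₂ : 0 < g₂)
    (τ₁ τ₂ : ℝ → ℝ)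
    (hτ₁ : ∀ T : ℝ, 0 < T → τ₁ T ∈ Set.Ioo 0 T ∧
      IsMinOn (fun τ => zfun a₁ a₂ a₃ g₁ g₂ τ T) (Set.Icc 0 T) (τ₁ T))
    (hτ₂ : ∀ T : ℝ, 0 < T → τ₂ T ∈ Set.Ioo 0 T ∧
      IsMaxOn (fun τ => zfun a₁ a₂ a₃ g₁ g₂ τ T) (Set.Icc 0 T) (τ₂ T)) :
    (∀ T : ℝ, 0 < T →
      ((Acas a₁ a₂ a₃ g₁ g₂ *
        NormedSpace.exp ((T + τ₁ T) • Acas a₁ a₂ a₃ g₁ g₂) *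
        ((1 - NormedSpace.exp (T • Acas a₁ a₂ a₃ g₁ g₂))⁻¹) ^ 2) *ᵥ Bcas) 2 < 0 ∧
      ((Acas a₁ a₂ a₃ g₁ g₂ *
        NormedSpace.exp ((T + τ₂ T) • Acas a₁ a₂ a₃ g₁ g₂) *
        ((1 - NormedSpace.exp (T • Acas a₁ a₂ a₃ g₁ g₂))⁻¹) ^ 2) *ᵥ Bcas) 2 < 0) ∧
    StrictAntiOn (zminF a₁ a₂ a₃ g₁ g₂) (Set.Ioi 0) ∧
    StrictAntiOn (zmaxF a₁ a₂ a₃ g₁ g₂) (Set.Ioi 0) := by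
  have hmin_eq : ∀ S : ℝ, 0 < S →
      zminF a₁ a₂ a₃ g₁ g₂ S = Zs a₁ a₂ a₃ g₁ g₂ (τ₁ S) S := by
    intro S hS
    obtain ⟨hmem, hmin⟩ := hτ₁ S hS
    have hleast : IsLeast ((fun τ => zfun a₁ a₂ a₃ g₁ g₂ τ S) '' Set.Icc 0 S)
        (zfun a₁ a₂ a₃ g₁ g₂ (τ₁ S) S) := by
      constructor
      · exact ⟨τ₁ S, ⟨hmem.1.le, hmem.2.le⟩, rfl⟩
      · rintro y ⟨τ', hτ', rfl⟩
        exact isMinOn_iff.mp hmin τ' hτ'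
    rw [zminF, hleast.csInf_eq, zfun_eq ha₁ ha₂ ha₃ h₁₂ h₁₃ h₂₃ _ hS]
  have hmax_eq : ∀ S : ℝ, 0 < S →
      zmaxF a₁ a₂ a₃ g₁ g₂ S = Zs a₁ a₂ a₃ g₁ g₂ (τ₂ S) S := by
    intro S hS
    obtain ⟨hmem, hmax⟩ := hτ₂ S hS
    have hgreat : IsGreatest ((fun τ => zfun a₁ a₂ a₃ g₁ g₂ τ S) '' Set.Icc 0 S)
        (zfun a₁ a₂ a₃ g₁ g₂ (τ₂ S) S) := by
      constructor
      · exact ⟨τ₂ S, ⟨hmem.1.le, hmem.2.le⟩, rfl⟩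
      · rintro y ⟨τ', hτ', rfl⟩
        exact isMaxOn_iff.mp hmax τ' hτ'
    rw [zmaxF, hgreat.csSup_eq, zfun_eq ha₁ ha₂ ha₃ h₁₂ h₁₃ h₂₃ _ hS]
  refine ⟨?_, ?_, ?_⟩
  · intro T hT
    constructor
    · rw [Dexpr_eq ha₁ ha₂ ha₃ h₁₂ h₁₃ h₂₃ (τ₁ T) hT]
      exact DZs_neg ha₁ ha₂ ha₃ h₁₂ h₁₃ h₂₃ hg₁ hg₂ (hτ₁ T hT).1.1.le hT
    · rw [Dexpr_eq ha₁ ha₂ ha₃ h₁₂ h₁₃ h₂₃ (τ₂ T) hT]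
      exact DZs_neg ha₁ ha₂ ha₃ h₁₂ h₁₃ h₂₃ hg₁ hg₂ (hτ₂ T hT).1.1.le hT
  · -- zminF strictly decreasing
    intro T hT T' hT' hlt
    have hT0 : (0:ℝ) < T := hT
    have hT'0 : (0:ℝ) < T' := hT'
    rw [hmin_eq T hT0, hmin_eq T' hT'0]
    have hmem := (hτ₁ T hT0).1
    have step1 : Zs a₁ a₂ a₃ g₁ g₂ (τ₁ T') T' ≤ Zs a₁ a₂ a₃ g₁ g₂ (τ₁ T) T' := by
      rw [← zfun_eq ha₁ ha₂ ha₃ h₁₂ h₁₃ h₂₃ (τ₁ T') hT'0,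
        ← zfun_eq ha₁ ha₂ ha₃ h₁₂ h₁₃ h₂₃ (τ₁ T) hT'0]
      exact isMinOn_iff.mp (hτ₁ T' hT'0).2 (τ₁ T) ⟨hmem.1.le, hmem.2.le.trans hlt.le⟩
    have step2 : Zs a₁ a₂ a₃ g₁ g₂ (τ₁ T) T' < Zs a₁ a₂ a₃ g₁ g₂ (τ₁ T) T :=
      Zs_strictAntiT ha₁ ha₂ ha₃ h₁₂ h₁₃ h₂₃ hg₁ hg₂ hmem.1.le hT0 hT'0 hlt
    linarith
  · -- zmaxF strictly decreasing
    intro T hT T' hT' hlt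
    have hT0 : (0:ℝ) < T := hT
    have hT'0 : (0:ℝ) < T' := hT'
    rw [hmax_eq T hT0, hmax_eq T' hT'0]
    have hmem' := (hτ₂ T' hT'0).1
    set θ := τ₂ T' with hθ
    have hθ0 : 0 < θ := hmem'.1
    have step2 : Zs a₁ a₂ a₃ g₁ g₂ θ T' < Zs a₁ a₂ a₃ g₁ g₂ θ T :=
      Zs_strictAntiT ha₁ ha₂ ha₃ h₁₂ h₁₃ h₂₃ hg₁ hg₂ hθ0.le hT0 hT'0 hlt
    -- fold θ into [0, T]
    set k : ℕ := ⌊θ / T⌋₊ with hk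
    set σ := θ - k * T with hσdef
    have hσ0 : 0 ≤ σ := by
      have h1 : (k : ℝ) ≤ θ / T := Nat.floor_le (by positivity)
      have := (le_div_iff₀ hT0).mp h1
      simp only [hσdef]
      linarith
    have hσT : σ ≤ T := by
      have h2 : θ / T < k + 1 := Nat.lt_floor_add_one _
      have := (div_lt_iff₀ hT0).mp h2
      simp only [hσdef]
      nlinarith
    have hfold : Zs a₁ a₂ a₃ g₁ g₂ θ T ≤ Zs a₁ a₂ a₃ g₁ g₂ σ T := by
      have harg : θ = σ + k * T := by simp only [hσdef]; ring
      rw [harg]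
      exact Zs_fold ha₁ ha₂ ha₃ h₁₂ h₁₃ h₂₃ hg₁ hg₂ hσ0 hT0 k
    have hup : Zs a₁ a₂ a₃ g₁ g₂ σ T ≤ Zs a₁ a₂ a₃ g₁ g₂ (τ₂ T) T := by
      rw [← zfun_eq ha₁ ha₂ ha₃ h₁₂ h₁₃ h₂₃ σ hT0,
        ← zfun_eq ha₁ ha₂ ha₃ h₁₂ h₁₃ h₂₃ (τ₂ T) hT0]
      exact isMaxOn_iff.mp (hτ₂ T hT0).2 σ ⟨hσ0, hσT⟩
    linarith
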